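/- Let H be a complex Hilbert space, let Ω ∈ H, and let (V_t)_{t ∈ ℝ} be a family of unitary operators on H such that V_t Ω = Ω and (V_t)* Ω = Ω for all t. Let F be a bounded operator on H with F* = F, and set E = cos(1)·1 + (i·sin(1))·F, so that E* = cos(1)·1 − (i·sin(1))·F. If the function t ↦ ⟨FΩ, V_t(FΩ)⟩ is differentiable at t = 0 with derivative d, then the function t ↦ ⟨E*Ω, V_t(E*Ω)⟩ is differentiable at t = 0 with derivative sin(1)²·d. -/
import Mathlib


open Complex
open scoped InnerProductSpace

/-- If the unitaries `V_t` fix `Ω` (and their adjoints do too), `F` is bounded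
self-adjoint, and `E = cos(1)·1 + i·sin(1)·F`, then differentiability at `t = 0`
of `t ↦ ⟨FΩ, V_t FΩ⟩` with derivative `d` implies differentiability of
`t ↦ ⟨E*Ω, V_t E*Ω⟩` at `t = 0` with derivative `sin(1)²·d`. -/
theorem stmt_10 {H : Type*} [NormedAddCommGroup H] [InnerProductSpace ℂ H]
    [CompleteSpace H] (Ω : H) (V : ℝ → H →L[ℂ] H)
    (hVunit : ∀ t : ℝ, V t ∈ unitary (H →L[ℂ] H))
    (hVΩ : ∀ t : ℝ, V t Ω = Ω)
    (hVadjΩ : ∀ t : ℝ, (star (V t)) Ω = Ω)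
    (F : H →L[ℂ] H) (hF : IsSelfAdjoint F)
    (E : H →L[ℂ] H)
    (hE : E = (Real.cos 1 : ℂ) • (1 : H →L[ℂ] H) + (I * (Real.sin 1 : ℂ)) • F)
    (d : ℂ)
    (hd : HasDerivAt (fun t : ℝ => ⟪F Ω, V t (F Ω)⟫_ℂ) d 0) :
    HasDerivAt (fun t : ℝ => ⟪(star E) Ω, V t ((star E) Ω)⟫_ℂ)
      (((Real.sin 1 : ℂ)) ^ 2 * d) 0 := by
  set a : ℂ := (Real.cos 1 : ℂ) with ha
  set b : ℂ := -(I * (Real.sin 1 : ℂ)) with hb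
  have hstarE : (star E) Ω = a • Ω + b • F Ω := by
    rw [hE, star_add, star_smul, star_smul, star_one, hF.star_eq]
    simp [ha, hb, ContinuousLinearMap.add_apply, ContinuousLinearMap.smul_apply,
      neg_smul, Complex.conj_ofReal, ← Complex.cos_conj, ← Complex.sin_conj]
  -- inner products with Ω are constant in t
  have hleft : ∀ (t : ℝ) (x : H), ⟪Ω, V t x⟫_ℂ = ⟪Ω, x⟫_ℂ := by
    intro t x
    calc ⟪Ω, V t x⟫_ℂ = ⟪ContinuousLinearMap.adjoint (V t) Ω, x⟫_ℂ := by
          rw [ContinuousLinearMap.adjoint_inner_left]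
      _ = ⟪Ω, x⟫_ℂ := by
          rw [← ContinuousLinearMap.star_eq_adjoint, hVadjΩ]
  have key : ∀ t : ℝ, ⟪(star E) Ω, V t ((star E) Ω)⟫_ℂ =
      (starRingEnd ℂ a * a * ⟪Ω, Ω⟫_ℂ + starRingEnd ℂ a * b * ⟪Ω, F Ω⟫_ℂ
        + starRingEnd ℂ b * a * ⟪F Ω, Ω⟫_ℂ)
      + ((Real.sin 1 : ℂ)) ^ 2 * ⟪F Ω, V t (F Ω)⟫_ℂ := by
    intro t
    have hbb : starRingEnd ℂ b * b = ((Real.sin 1 : ℂ)) ^ 2 := by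
      simp only [hb, map_neg, map_mul, Complex.conj_I, Complex.conj_ofReal]
      ring_nf
      rw [Complex.I_sq]
      ring
    rw [hstarE]
    simp only [map_add, map_smul, inner_add_left, inner_add_right,
      inner_smul_left, inner_smul_right, hVΩ, hleft]
    rw [← hbb]
    ring
  have : HasDerivAt (fun t : ℝ =>
      (starRingEnd ℂ a * a * ⟪Ω, Ω⟫_ℂ + starRingEnd ℂ a * b * ⟪Ω, F Ω⟫_ℂ
        + starRingEnd ℂ b * a * ⟪F Ω, Ω⟫_ℂ)
      + ((Real.sin 1 : ℂ)) ^ 2 * ⟪F Ω, V t (F Ω)⟫_ℂ)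
      (0 + ((Real.sin 1 : ℂ)) ^ 2 * d) 0 :=
    (hasDerivAt_const _ _).add (hd.const_mul _)
  rw [zero_add] at this
  exact this.congr_of_eventuallyEq (Filter.Eventually.of_forall key)
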